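/- arXiv:2308.02421 — 2 statements merged into one kernel-verified Lean document; each statement's English description precedes it below -/
import Mathlib

section
/- Let ω : ℝ → ℂ be continuous with compact support, s : ℤ → ℂ a signal with finite support, N a positive natural number, and f : ℤ a frequency index. Then the function F : ℝ → ℂ defined by F(t) = ∑_{k ∈ ℤ} ω(k - (t - ⌊t⌋)) · s(⌊t⌋ + k) · e^{-2πi(k - (t - ⌊t⌋))f/N} is continuous on all of ℝ (in particular, at every integer t). -/
open Complex Real

/-- the modified STFT frame, as a function of the continuous
frame position `t`, is continuous on all of ℝ. -/
theorem stmt_1 (ω : ℝ → ℂ) (hω : Continuous ω) (hωc : HasCompactSupport ω)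
    (s : ℤ → ℂ) (hs : (Function.support s).Finite)
    (N : ℕ) (hN : 0 < N) (f : ℤ) :
    Continuous (fun t : ℝ =>
      ∑ᶠ k : ℤ, ω ((k : ℝ) - Int.fract t) * s (⌊t⌋ + k) *
        Complex.exp (-2 * (Real.pi : ℂ) * Complex.I *
          ((k : ℂ) - (Int.fract t : ℝ)) * (f : ℂ) / (N : ℂ))) := by
  have key : ∀ t : ℝ,
      (∑ᶠ k : ℤ, ω ((k : ℝ) - Int.fract t) * s (⌊t⌋ + k) *
        Complex.exp (-2 * (Real.pi : ℂ) * Complex.I *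
          ((k : ℂ) - (Int.fract t : ℝ)) * (f : ℂ) / (N : ℂ)))
      = ∑ j ∈ hs.toFinset, ω ((j : ℝ) - t) * s j *
        Complex.exp (-2 * (Real.pi : ℂ) * Complex.I *
          ((j : ℂ) - (t : ℂ)) * (f : ℂ) / (N : ℂ)) := by
    intro t
    have h1 : (∑ᶠ k : ℤ, ω ((k : ℝ) - Int.fract t) * s (⌊t⌋ + k) *
        Complex.exp (-2 * (Real.pi : ℂ) * Complex.I *
          ((k : ℂ) - (Int.fract t : ℝ)) * (f : ℂ) / (N : ℂ)))
        = ∑ᶠ j : ℤ, ω ((j : ℝ) - t) * s j *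
        Complex.exp (-2 * (Real.pi : ℂ) * Complex.I *
          ((j : ℂ) - (t : ℂ)) * (f : ℂ) / (N : ℂ)) := by
      refine finsum_eq_of_bijective (fun k => ⌊t⌋ + k) (Equiv.addLeft (⌊t⌋)).bijective ?_
      intro k
      have h2 : ((⌊t⌋ + k : ℤ) : ℝ) - t = (k : ℝ) - Int.fract t := by
        rw [Int.fract]; push_cast; ring
      have h3 : ((⌊t⌋ + k : ℤ) : ℂ) - (t : ℂ) = (k : ℂ) - ((Int.fract t : ℝ) : ℂ) := by
        have := congrArg (fun x : ℝ => (x : ℂ)) h2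
        push_cast at this ⊢
        linear_combination this
      rw [h2, h3]
    rw [h1]
    refine finsum_eq_finset_sum_of_support_subset _ ?_
    intro j hj
    simp only [Function.mem_support] at hj
    have : s j ≠ 0 := by
      intro h; apply hj; simp [h]
    simpa using hs.mem_toFinset.2 this
  have : (fun t : ℝ =>
      ∑ᶠ k : ℤ, ω ((k : ℝ) - Int.fract t) * s (⌊t⌋ + k) *
        Complex.exp (-2 * (Real.pi : ℂ) * Complex.I *
          ((k : ℂ) - (Int.fract t : ℝ)) * (f : ℂ) / (N : ℂ)))
      = fun t : ℝ => ∑ j ∈ hs.toFinset, ω ((j : ℝ) - t) * s j *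
        Complex.exp (-2 * (Real.pi : ℂ) * Complex.I *
          ((j : ℂ) - (t : ℂ)) * (f : ℂ) / (N : ℂ)) := funext key
  rw [this]
  refine continuous_finset_sum _ fun j _ => ?_
  have hc1 : Continuous (fun t : ℝ => ω ((j : ℝ) - t)) :=
    hω.comp (continuous_const.sub continuous_id)
  have hc2 : Continuous (fun t : ℝ => Complex.exp (-2 * (Real.pi : ℂ) * Complex.I *
      ((j : ℂ) - (t : ℂ)) * (f : ℂ) / (N : ℂ))) := by
    apply Complex.continuous_exp.comp
    apply Continuous.div_const
    apply Continuous.mul _ continuous_const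
    exact continuous_const.mul (continuous_const.sub Complex.continuous_ofReal)
  exact (hc1.mul continuous_const).mul hc2
end

section
/- Let ω : ℝ → ℂ be continuously differentiable with compact support, s : ℤ → ℂ have finite support, N > 0, f an integer. Then the function F(t) = ∑_{k ∈ ℤ} ω(k - (t - ⌊t⌋)) · s(⌊t⌋ + k) · e^{-2πi(k - (t - ⌊t⌋))f/N} is differentiable at every real t, including integer values of t. -/
open Complex Real

/-- Proposition 2: the modified STFT frame is differentiable at
every real frame position `t`, including integers. -/
theorem stmt_3 (ω : ℝ → ℂ) (hω1 : ContDiff ℝ 1 ω) (hωc : HasCompactSupport ω)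
    (s : ℤ → ℂ) (hs : (Function.support s).Finite)
    (N : ℕ) (hN : 0 < N) (f : ℤ) (t : ℝ) :
    DifferentiableAt ℝ (fun t : ℝ =>
      ∑ᶠ k : ℤ, ω ((k : ℝ) - Int.fract t) * s (⌊t⌋ + k) *
        Complex.exp (-2 * (Real.pi : ℂ) * Complex.I *
          ((k : ℂ) - (Int.fract t : ℝ)) * (f : ℂ) / (N : ℂ))) t := by
  have key : ∀ u : ℝ, (∑ᶠ k : ℤ, ω ((k : ℝ) - Int.fract u) * s (⌊u⌋ + k) *
        Complex.exp (-2 * (Real.pi : ℂ) * Complex.I *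
          ((k : ℂ) - (Int.fract u : ℝ)) * (f : ℂ) / (N : ℂ)))
      = ∑ᶠ j : ℤ, ω ((j : ℝ) - u) * s j *
        Complex.exp (-2 * (Real.pi : ℂ) * Complex.I *
          ((j : ℂ) - (u : ℂ)) * (f : ℂ) / (N : ℂ)) := by
    intro u
    rw [← finsum_comp_equiv (Equiv.addLeft ⌊u⌋) (f := fun j : ℤ => ω ((j : ℝ) - u) * s j *
        Complex.exp (-2 * (Real.pi : ℂ) * Complex.I *
          ((j : ℂ) - (u : ℂ)) * (f : ℂ) / (N : ℂ)))]
    apply finsum_congr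
    intro k
    have h1 : (((⌊u⌋ + k : ℤ) : ℝ)) - u = (k : ℝ) - Int.fract u := by
      rw [Int.fract]; push_cast; ring
    have h2 : (((⌊u⌋ + k : ℤ) : ℂ)) - (u : ℂ) = (k : ℂ) - ((Int.fract u : ℝ) : ℂ) := by
      rw [Int.fract]; push_cast; ring
    simp only [Equiv.coe_addLeft]
    rw [h1, h2]
  simp only [key]
  have hsub : ∀ u : ℝ, (Function.support fun j : ℤ => ω ((j : ℝ) - u) * s j *
        Complex.exp (-2 * (Real.pi : ℂ) * Complex.I *
          ((j : ℂ) - (u : ℂ)) * (f : ℂ) / (N : ℂ))) ⊆ hs.toFinset := by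
    intro u j hj
    simp only [Set.Finite.coe_toFinset, Function.mem_support]
    intro h0
    apply hj
    simp [h0]
  have : ∀ u : ℝ, (∑ᶠ j : ℤ, ω ((j : ℝ) - u) * s j *
        Complex.exp (-2 * (Real.pi : ℂ) * Complex.I *
          ((j : ℂ) - (u : ℂ)) * (f : ℂ) / (N : ℂ)))
      = ∑ j ∈ hs.toFinset, ω ((j : ℝ) - u) * s j *
        Complex.exp (-2 * (Real.pi : ℂ) * Complex.I *
          ((j : ℂ) - (u : ℂ)) * (f : ℂ) / (N : ℂ)) := fun u =>
    finsum_eq_sum_of_support_subset _ (by exact_mod_cast hsub u)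
  simp only [this]
  apply DifferentiableAt.fun_sum
  intro j _
  have hωd : Differentiable ℝ ω := hω1.differentiable one_ne_zero
  apply DifferentiableAt.mul
  · apply DifferentiableAt.mul
    · exact (hωd _).comp t (by fun_prop)
    · exact differentiableAt_const _
  · apply DifferentiableAt.cexp
    have hre : DifferentiableAt ℝ (fun x : ℝ => (x : ℂ)) t :=
      Complex.ofRealCLM.differentiable.differentiableAt
    exact ((((differentiableAt_const _).sub hre).const_mul _).mul_const _).div_const _
end
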